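/- Let a ≠ b, c ≠ d, p ≠ q be real parameters satisfying the invariance equation G_{p,q}(G_{a,b}(x,y), G_{c,d}(x,y)) = G_{p,q}(x,y) for all positive reals x, y. Then a + b + c + d = 2(p + q). -/

import Mathlib

open Real Filter Topology

noncomputable def gini (p q x y : ℝ) : ℝ := ((x ^ p + y ^ p) / (x ^ q + y ^ q)) ^ (1 / (p - q))

noncomputable def Efun (s : ℝ) : ℝ := if s = 0 then 1 else (Real.exp s - 1) / s
noncomputable def Gfun (w : ℝ) : ℝ := if w = 0 then 1 else Real.log (1 + w) / w

lemma Efun_mul (s : ℝ) : Efun s * s = Real.exp s - 1 := by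
  unfold Efun; split_ifs with h
  · simp [h]
  · field_simp

lemma Gfun_mul (w : ℝ) : Gfun w * w = Real.log (1 + w) := by
  unfold Gfun; split_ifs with h
  · simp [h]
  · field_simp

lemma tendsto_Efun : Tendsto Efun (𝓝 0) (𝓝 1) := by
  rw [← nhdsNE_sup_pure, tendsto_sup]
  constructor
  · have h := Real.hasDerivAt_exp 0
    rw [hasDerivAt_iff_tendsto_slope] at h
    rw [Real.exp_zero] at h
    refine h.congr' ?_
    filter_upwards [self_mem_nhdsWithin] with s hs
    have hs' : s ≠ 0 := hs
    simp [slope_def_field, Efun, hs', Real.exp_zero]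
  · have h0 : Efun 0 = 1 := by simp [Efun]
    simpa [h0] using tendsto_pure_nhds Efun 0

lemma tendsto_Gfun : Tendsto Gfun (𝓝 0) (𝓝 1) := by
  rw [← nhdsNE_sup_pure, tendsto_sup]
  constructor
  · have h : HasDerivAt (fun w : ℝ => Real.log (1 + w)) 1 0 := by
      have h1 : HasDerivAt (fun w : ℝ => 1 + w) 1 0 := by
        simpa using (hasDerivAt_id (0:ℝ)).const_add 1
      have h2 := (Real.hasDerivAt_log (by norm_num : (1:ℝ) + 0 ≠ 0)).comp 0 h1
      simpa [Function.comp_def] using h2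
    rw [hasDerivAt_iff_tendsto_slope] at h
    refine h.congr' ?_
    filter_upwards [self_mem_nhdsWithin] with s hs
    have hs' : s ≠ 0 := hs
    simp [slope_def_field, Gfun, hs']
  · have h0 : Gfun 0 = 1 := by simp [Gfun]
    simpa [h0] using tendsto_pure_nhds Gfun 0

lemma tendsto_sq_zero : Tendsto (fun t : ℝ => t^2) (𝓝[≠] 0) (𝓝 0) := by
  have h : Tendsto (fun t : ℝ => t^2) (𝓝 0) (𝓝 0) := by
    simpa using (continuous_pow 2).tendsto (0:ℝ)
  exact h.mono_left nhdsWithin_le_nhds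

lemma tendsto_self_of_div_sq {w : ℝ → ℝ} {β : ℝ}
    (hw : Tendsto (fun t => w t / t^2) (𝓝[≠] 0) (𝓝 β)) :
    Tendsto w (𝓝[≠] 0) (𝓝 0) := by
  have h := hw.mul tendsto_sq_zero
  rw [mul_zero] at h
  refine h.congr' ?_
  filter_upwards [self_mem_nhdsWithin] with t ht
  have ht2 : (t:ℝ)^2 ≠ 0 := pow_ne_zero _ ht
  exact div_mul_cancel₀ _ ht2

lemma tendsto_log_div_sq {w : ℝ → ℝ} {β : ℝ}
    (hw : Tendsto (fun t => w t / t^2) (𝓝[≠] 0) (𝓝 β)) :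
    Tendsto (fun t => Real.log (1 + w t) / t^2) (𝓝[≠] 0) (𝓝 β) := by
  have h0 := tendsto_self_of_div_sq hw
  have h1 : Tendsto (fun t => Gfun (w t) * (w t / t^2)) (𝓝[≠] 0) (𝓝 (1 * β)) :=
    (tendsto_Gfun.comp h0).mul hw
  rw [one_mul] at h1
  refine h1.congr fun t => ?_
  rw [← Gfun_mul (w t)]; ring

lemma tendsto_cosh_div_sq (r : ℝ) :
    Tendsto (fun t => ((Real.exp (r*t) + Real.exp (r*(-t)))/2 - 1) / t^2) (𝓝[≠] 0)
      (𝓝 (r^2/2)) := by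
  have hrt : Tendsto (fun t : ℝ => r * t) (𝓝[≠] 0) (𝓝 0) := by
    have h : Tendsto (fun t : ℝ => r * t) (𝓝 0) (𝓝 (r*0)) :=
      (continuous_const.mul continuous_id).tendsto 0
    rw [mul_zero] at h
    exact h.mono_left nhdsWithin_le_nhds
  have hE : Tendsto (fun t => Efun (r*t)) (𝓝[≠] 0) (𝓝 1) := tendsto_Efun.comp hrt
  have hex : Tendsto (fun t => Real.exp (-(r*t)/2)) (𝓝[≠] 0) (𝓝 1) := by
    have h2 : Tendsto (fun t : ℝ => -(r*t)/2) (𝓝[≠] 0) (𝓝 0) := by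
      have := (hrt.neg).div_const 2
      simpa using this
    have := (Real.continuous_exp.tendsto 0).comp h2
    simpa [Function.comp_def] using this
  have h1 : Tendsto (fun t => (Real.exp (-(r*t)/2) * Efun (r*t) * r)^2 / 2) (𝓝[≠] 0)
      (𝓝 (r^2/2)) := by
    have := ((((hex.mul hE).mul (tendsto_const_nhds (x := r))).pow 2).div_const 2)
    simpa using this
  refine h1.congr' ?_
  filter_upwards [self_mem_nhdsWithin] with t ht
  have ht' : (t:ℝ) ≠ 0 := ht
  have ht2 : (t:ℝ)^2 ≠ 0 := pow_ne_zero _ ht'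
  set s := r * t with hs
  have hsq : (Real.exp (-s/2))^2 = Real.exp (-s) := by
    rw [sq, ← Real.exp_add]; ring_nf
  have hE2 := Efun_mul s
  have e1 : Real.exp (-s) * Real.exp s = 1 := by rw [← Real.exp_add]; simp
  have key : (Real.exp (-s/2) * Efun s * r)^2 * t^2 = Real.exp s - 2 + Real.exp (-s) := by
    have h3 : (Real.exp (-s/2) * Efun s * r)^2 * t^2
        = (Real.exp (-s/2))^2 * (Efun s * s)^2 := by
      rw [hs]; ring
    rw [h3, hsq, hE2]
    linear_combination (Real.exp s - 2) * e1
  have hneg : Real.exp (r*(-t)) = Real.exp (-s) := by rw [hs]; ring_nf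
  rw [hneg, eq_div_iff ht2]
  linear_combination (1/2 : ℝ) * key

lemma tendsto_log_cosh (r : ℝ) :
    Tendsto (fun t => Real.log ((Real.exp (r*t) + Real.exp (r*(-t)))/2) / t^2) (𝓝[≠] 0)
      (𝓝 (r^2/2)) := by
  have := tendsto_log_div_sq (tendsto_cosh_div_sq r)
  refine this.congr fun t => ?_
  ring_nf

lemma gini_pos (p q : ℝ) {x y : ℝ} (hx : 0 < x) (hy : 0 < y) : 0 < gini p q x y := by
  unfold gini
  have h1 : 0 < x ^ p + y ^ p := by positivity
  have h2 : 0 < x ^ q + y ^ q := by positivity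
  positivity

lemma log_gini_exp (p q u v : ℝ) :
    Real.log (gini p q (Real.exp u) (Real.exp v)) =
      (Real.log ((Real.exp (p*u) + Real.exp (p*v))/2)
        - Real.log ((Real.exp (q*u) + Real.exp (q*v))/2)) / (p - q) := by
  have key : ∀ r w : ℝ, Real.exp w ^ r = Real.exp (r*w) := by
    intro r w
    rw [Real.rpow_def_of_pos (Real.exp_pos w), Real.log_exp, mul_comm]
  unfold gini
  rw [key, key, key, key]
  have h1 : (0:ℝ) < Real.exp (p*u) + Real.exp (p*v) := by positivity
  have h2 : (0:ℝ) < Real.exp (q*u) + Real.exp (q*v) := by positivity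
  rw [Real.log_rpow (by positivity), Real.log_div h1.ne' h2.ne',
      Real.log_div h1.ne' (two_ne_zero), Real.log_div h2.ne' (two_ne_zero)]
  ring

lemma tendsto_log_gini_diag (r s : ℝ) (hrs : r ≠ s) :
    Tendsto (fun t => Real.log (gini r s (Real.exp t) (Real.exp (-t))) / t^2) (𝓝[≠] 0)
      (𝓝 ((r+s)/2)) := by
  have hrs' : r - s ≠ 0 := sub_ne_zero.mpr hrs
  have h := ((tendsto_log_cosh r).sub (tendsto_log_cosh s)).div_const (r - s)
  have hval : (r^2/2 - s^2/2)/(r-s) = (r+s)/2 := by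
    field_simp
    ring
  rw [hval] at h
  refine h.congr fun t => ?_
  rw [log_gini_exp]
  ring

theorem second_taylor_coefficient (a b c d p q : ℝ) (hab : a ≠ b) (hcd : c ≠ d) (hpq : p ≠ q)
    (h : ∀ x y : ℝ, 0 < x → 0 < y →
      gini p q (gini a b x y) (gini c d x y) = gini p q x y) :
    a + b + c + d = 2 * (p + q) := by
  set u : ℝ → ℝ := fun t => Real.log (gini a b (Real.exp t) (Real.exp (-t))) with hu_def
  set v : ℝ → ℝ := fun t => Real.log (gini c d (Real.exp t) (Real.exp (-t))) with hv_def
  have hu : Tendsto (fun t => u t / t^2) (𝓝[≠] 0) (𝓝 ((a+b)/2)) :=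
    tendsto_log_gini_diag a b hab
  have hv : Tendsto (fun t => v t / t^2) (𝓝[≠] 0) (𝓝 ((c+d)/2)) :=
    tendsto_log_gini_diag c d hcd
  have hu0 : Tendsto u (𝓝[≠] 0) (𝓝 0) := tendsto_self_of_div_sq hu
  have hv0 : Tendsto v (𝓝[≠] 0) (𝓝 0) := tendsto_self_of_div_sq hv
  set α := (a+b)/2 with hα
  set γ := (c+d)/2 with hγ
  -- limit of each "average of exponentials" term in the composite
  have hcomp : ∀ r : ℝ,
      Tendsto (fun t => Real.log ((Real.exp (r * u t) + Real.exp (r * v t))/2) / t^2)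
        (𝓝[≠] 0) (𝓝 (r * (α + γ) / 2)) := by
    intro r
    have hru : Tendsto (fun t => r * u t) (𝓝[≠] 0) (𝓝 0) := by
      have := hu0.const_mul r
      simpa using this
    have hrv : Tendsto (fun t => r * v t) (𝓝[≠] 0) (𝓝 0) := by
      have := hv0.const_mul r
      simpa using this
    have T1 : Tendsto (fun t => Efun (r * u t) * r * (u t / t^2)) (𝓝[≠] 0)
        (𝓝 (1 * r * α)) := ((tendsto_Efun.comp hru).mul tendsto_const_nhds).mul hu
    have T2 : Tendsto (fun t => Efun (r * v t) * r * (v t / t^2)) (𝓝[≠] 0)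
        (𝓝 (1 * r * γ)) := ((tendsto_Efun.comp hrv).mul tendsto_const_nhds).mul hv
    have hw : Tendsto
        (fun t => ((Real.exp (r * u t) + Real.exp (r * v t))/2 - 1) / t^2) (𝓝[≠] 0)
        (𝓝 (r * (α + γ) / 2)) := by
      have h3 := (T1.add T2).div_const 2
      have hval : (1 * r * α + 1 * r * γ) / 2 = r * (α + γ) / 2 := by ring
      rw [hval] at h3
      refine h3.congr fun t => ?_
      rw [show Real.exp (r * u t) = Efun (r * u t) * (r * u t) + 1 by rw [Efun_mul]; ring,
          show Real.exp (r * v t) = Efun (r * v t) * (r * v t) + 1 by rw [Efun_mul]; ring]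
      ring
    have := tendsto_log_div_sq hw
    refine this.congr fun t => ?_
    ring_nf
  have hLHS : Tendsto
      (fun t => Real.log (gini p q (Real.exp (u t)) (Real.exp (v t))) / t^2) (𝓝[≠] 0)
      (𝓝 ((α + γ)/2)) := by
    have hpq' : p - q ≠ 0 := sub_ne_zero.mpr hpq
    have h2 := ((hcomp p).sub (hcomp q)).div_const (p - q)
    have hval : (p * (α + γ) / 2 - q * (α + γ) / 2) / (p - q) = (α + γ)/2 := by
      field_simp
    rw [hval] at h2
    refine h2.congr fun t => ?_
    rw [log_gini_exp]
    ring
  have heq : ∀ t : ℝ, Real.log (gini p q (Real.exp (u t)) (Real.exp (v t)))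
      = Real.log (gini p q (Real.exp t) (Real.exp (-t))) := by
    intro t
    rw [hu_def, hv_def]
    simp only
    rw [Real.exp_log (gini_pos a b (Real.exp_pos t) (Real.exp_pos (-t))),
        Real.exp_log (gini_pos c d (Real.exp_pos t) (Real.exp_pos (-t))),
        h _ _ (Real.exp_pos t) (Real.exp_pos (-t))]
  have hLHS' : Tendsto
      (fun t => Real.log (gini p q (Real.exp t) (Real.exp (-t))) / t^2) (𝓝[≠] 0)
      (𝓝 ((α + γ)/2)) := by
    refine hLHS.congr fun t => ?_
    rw [heq]
  have hRHS := tendsto_log_gini_diag p q hpq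
  have hfin : (α + γ)/2 = (p + q)/2 := tendsto_nhds_unique hLHS' hRHS
  rw [hα, hγ] at hfin
  linarith
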